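/- Let C be a set of 17 subspaces of V = F₂⁷ such that any two distinct members U₁, U₂ of C satisfy the subspace-distance bound dim U₁ + dim U₂ − 2·dim(U₁ ∩ U₂) ≥ 6, and suppose exactly 16 members of C have dimension 3 and one member F has dimension 5 (i.e., C is a (7,17,6)₂ subspace code of dimension distribution (3^16 5^1)). Then the 16 three-dimensional members of C form a partial plane spread S of size 16 in PG(6,2), and every hole of S is contained in F. -/

import Mathlib

open Module

abbrev V2 : Type := Fin 7 → ZMod 2

/-- A partial plane spread in PG(6,2): a set of 3-dimensional subspaces of `V2 = F₂⁷`
(the blocks) any two distinct members of which intersect trivially. -/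
def IsPPS (S : Set (Submodule (ZMod 2) V2)) : Prop :=
  (∀ B ∈ S, finrank (ZMod 2) ↥B = 3) ∧
    ∀ B₁ ∈ S, ∀ B₂ ∈ S, B₁ ≠ B₂ → B₁ ⊓ B₂ = ⊥

/-- A point (1-dimensional subspace) of `V2` is a hole of `S` if it is contained
in no block of `S`. -/
def IsHole (S : Set (Submodule (ZMod 2) V2)) (P : Submodule (ZMod 2) V2) : Prop :=
  finrank (ZMod 2) ↥P = 1 ∧ ∀ B ∈ S, ¬ P ≤ B

/-- The number of holes of `S` contained in the subspace `X`. -/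
noncomputable def holeCount (S : Set (Submodule (ZMod 2) V2))
    (X : Submodule (ZMod 2) V2) : ℕ :=
  {P | IsHole S P ∧ P ≤ X}.ncard

/-- The span `⟨N⟩` of the set of holes of `S`. -/
noncomputable def holeSpan (S : Set (Submodule (ZMod 2) V2)) : Submodule (ZMod 2) V2 :=
  sSup {P | IsHole S P}

/-- The number of blocks of `S` contained in the subspace `H`. -/
noncomputable def blocksIn (S : Set (Submodule (ZMod 2) V2))
    (H : Submodule (ZMod 2) V2) : ℕ :=
  {B ∈ S | B ≤ H}.ncard

/-- `spec S i` = the number of hyperplanes of `V2` containing exactly `i` blocks of `S`. -/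
noncomputable def spec (S : Set (Submodule (ZMod 2) V2)) (i : ℕ) : ℕ :=
  {H : Submodule (ZMod 2) V2 | finrank (ZMod 2) ↥H = 6 ∧ blocksIn S H = i}.ncard

-- aux lemmas
lemma V2card : Fintype.card V2 = 128 := by
  simp [Fintype.card_fun]

noncomputable def nz (W : Submodule (ZMod 2) V2) : Finset V2 :=
  Set.Finite.toFinset (Set.toFinite ((W : Set V2) \ {0}))

lemma mem_nz {W : Submodule (ZMod 2) V2} {v : V2} : v ∈ nz W ↔ v ∈ W ∧ v ≠ 0 := by
  simp [nz]

lemma nz_card (W : Submodule (ZMod 2) V2) :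
    (nz W).card = 2 ^ finrank (ZMod 2) ↥W - 1 := by
  classical
  have : Fintype ↥W := Fintype.ofFinite _
  have h : Fintype.card ↥W = 2 ^ finrank (ZMod 2) ↥W := by
    have := card_eq_pow_finrank (K := ZMod 2) (V := ↥W)
    rwa [ZMod.card] at this
  have hW : (W : Set V2).ncard = 2 ^ finrank (ZMod 2) ↥W := by
    rw [← Nat.card_coe_set_eq, Nat.card_eq_fintype_card]; exact h
  have h0 : (0 : V2) ∈ (W : Set V2) := W.zero_mem
  have := Set.ncard_diff_singleton_of_mem h0
  have hc : (nz W).card = ((W : Set V2) \ {0}).ncard :=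
    (Set.ncard_eq_toFinset_card _ _).symm
  rw [hc, this, hW]

lemma nz_subset (W : Submodule (ZMod 2) V2) :
    nz W ⊆ Finset.univ \ {0} := by
  intro v hv
  rw [mem_nz] at hv
  simp [hv.2]

theorem subspace_code_aux (C : Set (Submodule (ZMod 2) V2))
    (hcard : C.ncard = 17)
    (hdist : ∀ U₁ ∈ C, ∀ U₂ ∈ C, U₁ ≠ U₂ →
      2 * finrank (ZMod 2) ↥(U₁ ⊓ U₂) + 6 ≤
        finrank (ZMod 2) ↥U₁ + finrank (ZMod 2) ↥U₂)
    (F : Submodule (ZMod 2) V2) (hF : F ∈ C) (hF5 : finrank (ZMod 2) ↥F = 5)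
    (h3 : {U ∈ C | finrank (ZMod 2) ↥U = 3} = C \ {F}) :
    IsPPS {U ∈ C | finrank (ZMod 2) ↥U = 3} ∧
    {U ∈ C | finrank (ZMod 2) ↥U = 3}.ncard = 16 ∧
    ∀ P : Submodule (ZMod 2) V2,
      IsHole {U ∈ C | finrank (ZMod 2) ↥U = 3} P → P ≤ F := by
  classical
  set S := {U ∈ C | finrank (ZMod 2) ↥U = 3} with hSdef
  have hCfin : C.Finite := by
    by_contra h
    rw [Set.Infinite.ncard h] at hcard
    exact absurd hcard (by norm_num)
  have hSfin : S.Finite := hCfin.subset (fun U hU => hU.1)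
  have hS16 : S.ncard = 16 := by
    rw [h3, Set.ncard_diff_singleton_of_mem hF, hcard]
  have hSmem : ∀ B ∈ S, B ∈ C ∧ finrank (ZMod 2) ↥B = 3 := fun B hB => hB
  have hFS : F ∉ S := by rw [h3]; simp
  have hPPS : IsPPS S := by
    refine ⟨fun B hB => hB.2, fun B₁ h₁ B₂ h₂ hne => ?_⟩
    have h := hdist B₁ h₁.1 B₂ h₂.1 hne
    rw [h₁.2, h₂.2] at h
    have h0 : finrank (ZMod 2) ↥(B₁ ⊓ B₂) = 0 := by omega
    exact Submodule.finrank_eq_zero.mp h0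
  refine ⟨hPPS, hS16, ?_⟩
  -- counting
  set T : Finset (Submodule (ZMod 2) V2) := hSfin.toFinset with hTdef
  have hTmem : ∀ B, B ∈ T ↔ B ∈ S := fun B => hSfin.mem_toFinset
  have hT16 : T.card = 16 := by
    rw [← hS16, Set.ncard_eq_toFinset_card _ hSfin]
  set cov : Finset V2 := T.biUnion nz with hcov
  have hdisj : ∀ B₁ ∈ T, ∀ B₂ ∈ T, B₁ ≠ B₂ → Disjoint (nz B₁) (nz B₂) := by
    intro B₁ h₁ B₂ h₂ hne
    rw [Finset.disjoint_left]
    intro v hv1 hv2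
    rw [mem_nz] at hv1 hv2
    have : v ∈ B₁ ⊓ B₂ := ⟨hv1.1, hv2.1⟩
    rw [hPPS.2 B₁ ((hTmem _).mp h₁) B₂ ((hTmem _).mp h₂) hne] at this
    exact hv1.2 this
  have hcovcard : cov.card = 112 := by
    rw [hcov, Finset.card_biUnion hdisj]
    have : ∀ B ∈ T, (nz B).card = 7 := by
      intro B hB
      rw [nz_card, (hSmem B ((hTmem _).mp hB)).2]
      rfl
    rw [Finset.sum_congr rfl this, Finset.sum_const, hT16]
    rfl
  have hcovsub : cov ⊆ Finset.univ \ {0} := by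
    intro v hv
    rw [hcov, Finset.mem_biUnion] at hv
    obtain ⟨B, _, hvB⟩ := hv
    exact nz_subset B hvB
  have hunivcard : (Finset.univ \ {0} : Finset V2).card = 127 := by
    rw [Finset.card_sdiff_of_subset (by simp), Finset.card_univ, V2card, Finset.card_singleton]
  set unc : Finset V2 := (Finset.univ \ {0}) \ cov with hunc
  have hunccard : unc.card = 15 := by
    rw [hunc, Finset.card_sdiff_of_subset hcovsub, hunivcard, hcovcard]
  -- F side
  have hFnzcard : (nz F).card = 31 := by rw [nz_card, hF5]; rfl
  have hintercard : ((nz F) ∩ cov).card ≤ 16 := by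
    have hsub : (nz F) ∩ cov ⊆ T.biUnion (fun B => nz F ∩ nz B) := by
      intro v hv
      rw [Finset.mem_inter, hcov, Finset.mem_biUnion] at hv
      obtain ⟨hvF, B, hB, hvB⟩ := hv
      rw [Finset.mem_biUnion]
      exact ⟨B, hB, Finset.mem_inter.mpr ⟨hvF, hvB⟩⟩
    refine le_trans (Finset.card_le_card hsub) (le_trans (Finset.card_biUnion_le) ?_)
    have : ∀ B ∈ T, (nz F ∩ nz B).card ≤ 1 := by
      intro B hB
      obtain ⟨hBC, hB3⟩ := hSmem B ((hTmem _).mp hB)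
      have hne : F ≠ B := fun h => hFS (h ▸ ((hTmem _).mp hB))
      have hd := hdist F hF B hBC hne
      rw [hF5, hB3] at hd
      have h1 : finrank (ZMod 2) ↥(F ⊓ B) ≤ 1 := by omega
      have hsub2 : nz F ∩ nz B ⊆ nz (F ⊓ B) := by
        intro v hv
        rw [Finset.mem_inter, mem_nz, mem_nz] at hv
        rw [mem_nz]
        exact ⟨⟨hv.1.1, hv.2.1⟩, hv.1.2⟩
      calc (nz F ∩ nz B).card ≤ (nz (F ⊓ B)).card := Finset.card_le_card hsub2
        _ = 2 ^ finrank (ZMod 2) ↥(F ⊓ B) - 1 := nz_card _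
        _ ≤ 2 ^ 1 - 1 := by
            have := Nat.pow_le_pow_right (by norm_num : 1 ≤ 2) h1
            omega
        _ = 1 := by norm_num
    calc (∑ B ∈ T, (nz F ∩ nz B).card) ≤ ∑ B ∈ T, 1 := Finset.sum_le_sum this
      _ = 16 := by rw [Finset.sum_const, hT16]; rfl
  have hFdiff : 15 ≤ ((nz F) \ cov).card := by
    have := Finset.card_inter_add_card_sdiff (nz F) cov
    omega
  have hFdiffsub : (nz F) \ cov ⊆ unc := by
    intro v hv
    rw [Finset.mem_sdiff] at hv
    rw [hunc, Finset.mem_sdiff]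
    exact ⟨nz_subset F hv.1, hv.2⟩
  have hEq : unc = (nz F) \ cov := by
    refine (Finset.eq_of_subset_of_card_le hFdiffsub ?_).symm
    omega
  -- conclude
  intro P hP
  obtain ⟨hP1, hPB⟩ := hP
  have hPne : P ≠ ⊥ := by
    intro h
    rw [h, finrank_bot] at hP1
    exact absurd hP1 (by norm_num)
  obtain ⟨v, hvP, hv0⟩ := Submodule.exists_mem_ne_zero_of_ne_bot hPne
  have hspan : Submodule.span (ZMod 2) {v} = P := by
    apply Submodule.eq_of_le_of_finrank_le
    · rw [Submodule.span_le, Set.singleton_subset_iff]; exact hvP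
    · rw [hP1, finrank_span_singleton hv0]
  have hvunc : v ∈ unc := by
    rw [hunc, Finset.mem_sdiff]
    constructor
    · simp [hv0]
    · intro hvc
      rw [hcov, Finset.mem_biUnion] at hvc
      obtain ⟨B, hB, hvB⟩ := hvc
      rw [mem_nz] at hvB
      refine hPB B ((hTmem _).mp hB) ?_
      rw [← hspan, Submodule.span_le, Set.singleton_subset_iff]
      exact hvB.1
  rw [hEq, Finset.mem_sdiff, mem_nz] at hvunc
  rw [← hspan, Submodule.span_le, Set.singleton_subset_iff]
  exact hvunc.1.1

theorem subspace_code_3_16_5_1 (C : Set (Submodule (ZMod 2) V2))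
    (hcard : C.ncard = 17)
    (hdist : ∀ U₁ ∈ C, ∀ U₂ ∈ C, U₁ ≠ U₂ →
      2 * finrank (ZMod 2) ↥(U₁ ⊓ U₂) + 6 ≤
        finrank (ZMod 2) ↥U₁ + finrank (ZMod 2) ↥U₂)
    (F : Submodule (ZMod 2) V2) (hF : F ∈ C) (hF5 : finrank (ZMod 2) ↥F = 5)
    (h3 : {U ∈ C | finrank (ZMod 2) ↥U = 3} = C \ {F}) :
    IsPPS {U ∈ C | finrank (ZMod 2) ↥U = 3} ∧
    {U ∈ C | finrank (ZMod 2) ↥U = 3}.ncard = 16 ∧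
    ∀ P : Submodule (ZMod 2) V2,
      IsHole {U ∈ C | finrank (ZMod 2) ↥U = 3} P → P ≤ F :=
  subspace_code_aux C hcard hdist F hF hF5 h3
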